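/- A move set A ⊆ ℕ₀^d is reflexive for the misère-play convention (i.e., P(A) = A) if and only if A + A = A^c \ T_A, where A + A = {a + b : a, b ∈ A}, A^c is the complement of A in ℕ₀^d, and T_A is the set of terminal positions of the game A. -/

import Mathlib

/-- `x` is a terminal position of the subtraction game with move set `M`:
no move `m ∈ M` satisfies `m ≤ x`. -/
def Terminal {α : Type*} [PartialOrder α] [Sub α] (M : Set α) (x : α) : Prop :=
  ∀ m ∈ M, ¬ m ≤ x

/-- The set of terminal positions `T_M`. -/
def Tset {α : Type*} [PartialOrder α] [Sub α] (M : Set α) : Set α :=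
  {x | Terminal M x}

/-- Misère-play P-positions of a vector subtraction game, by well-founded recursion:
`x` is a P-position iff it has at least one option, and every option `x - m` is an
N-position, i.e. is terminal or has an option `x - m - m'` that is a P-position.
(The guard `x - m - m' < x` is automatic when `0 ∉ M`; when `0 ∈ M` the game is drawn
everywhere and this definition correctly yields no P-positions.) -/
def IsP {α : Type*} [PartialOrder α] [Sub α] [WellFoundedLT α] (M : Set α) : α → Prop :=
  (wellFounded_lt (α := α)).fix fun x rec =>
    (∃ m ∈ M, m ≤ x) ∧ ∀ m ∈ M, m ≤ x →
      (Terminal M (x - m) ∨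
        ∃ m' ∈ M, m' ≤ x - m ∧ ∃ h : x - m - m' < x, rec (x - m - m') h)

/-- The set of misère P-positions (this is also the `★`-operator `M ↦ M★`). -/
def Pset {α : Type*} [PartialOrder α] [Sub α] [WellFoundedLT α] (M : Set α) : Set α :=
  {x | IsP M x}

/-- `x` is a misère N-position: terminal, or has an option that is a P-position. -/
def IsN {α : Type*} [PartialOrder α] [Sub α] [WellFoundedLT α] (M : Set α) (x : α) : Prop :=
  Terminal M x ∨ ∃ m ∈ M, m ≤ x ∧ IsP M (x - m)

/-- The set of misère N-positions. -/
def Nset {α : Type*} [PartialOrder α] [Sub α] [WellFoundedLT α] (M : Set α) : Set α :=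
  {x | IsN M x}

/-- The set of minimal elements of `M`. -/
def minSet {α : Type*} [PartialOrder α] (M : Set α) : Set α :=
  {m ∈ M | ∀ m' ∈ M, m' ≤ m → m' = m}

/-- Pointwise convergence of the iterates of the `★`-operator to the set `L`. -/
def LimitsTo {α : Type*} [PartialOrder α] [Sub α] [WellFoundedLT α] (M L : Set α) : Prop :=
  ∀ x : α, ∃ N : ℕ, ∀ i ≥ N, (x ∈ Pset^[i] M ↔ x ∈ L)

/-- The one-dimensional reflexive games `M_k` (with `M_0 = ∅`). -/
def Mk (k : ℕ) : Set ℕ :=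
  {n | 1 ≤ k ∧ ∃ i j : ℕ, k ≤ j ∧ j ≤ 2 * k - 1 ∧ n = i * (3 * k - 1) + j}

section AuxLemmas

variable {d : ℕ}

lemma isP_iff {α : Type*} [PartialOrder α] [Sub α] [WellFoundedLT α] (M : Set α) (x : α) :
    IsP M x ↔ (∃ m ∈ M, m ≤ x) ∧ ∀ m ∈ M, m ≤ x →
      (Terminal M (x - m) ∨
        ∃ m' ∈ M, m' ≤ x - m ∧ ∃ _ : x - m - m' < x, IsP M (x - m - m')) := by
  conv_lhs => rw [IsP, WellFounded.fix_eq]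
  exact Iff.rfl

lemma sub_lt_self' {x m : Fin d → ℕ} (hm : m ≤ x) (h0 : m ≠ 0) : x - m < x := by
  refine lt_of_le_of_ne tsub_le_self fun h => h0 ?_
  have h1 : (x - m) + m = x := tsub_add_cancel_of_le hm
  rw [h] at h1
  exact add_left_cancel (a := x) (b := m) (c := 0) (by simpa using h1)

lemma not_isP_of_zero_mem {A : Set (Fin d → ℕ)} (h0 : (0 : Fin d → ℕ) ∈ A) (x : Fin d → ℕ) :
    ¬ IsP A x := by
  refine wellFounded_lt.induction (C := fun x => ¬ IsP A x) x (fun x ih hP => ?_)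
  rw [isP_iff] at hP
  rcases hP.2 0 h0 (zero_le : (0 : Fin d → ℕ) ≤ x) with ht | ⟨m', _, _, hlt, hP'⟩
  · exact ht 0 h0 (by simp)
  · exact ih _ hlt hP'

/-- A P-position has no P-position option. -/
lemma no_P_option {A : Set (Fin d → ℕ)} (x : Fin d → ℕ) :
    IsP A x → ∀ m ∈ A, m ≤ x → ¬ IsP A (x - m) := by
  refine wellFounded_lt.induction (C := fun x => IsP A x → ∀ m ∈ A, m ≤ x → ¬ IsP A (x - m)) x (fun x ih hx m hm hmx hPm => ?_)
  by_cases h0 : m = 0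
  · exact not_isP_of_zero_mem (h0 ▸ hm) x hx
  have hlt : x - m < x := sub_lt_self' hmx h0
  rw [isP_iff] at hx
  rcases hx.2 m hm hmx with ht | ⟨m', hm', hle', _, hP'⟩
  · rw [isP_iff] at hPm
    obtain ⟨m'', hm'', hle''⟩ := hPm.1
    exact ht m'' hm'' hle''
  · exact ih _ hlt hPm m' hm' hle' hP'

/-- Totality when `0 ∉ A`. -/
lemma isP_or_isN {A : Set (Fin d → ℕ)} (h0 : (0 : Fin d → ℕ) ∉ A) (x : Fin d → ℕ) :
    IsP A x ∨ IsN A x := by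
  refine wellFounded_lt.induction (C := fun x => IsP A x ∨ IsN A x) x (fun x ih => ?_)
  by_cases hT : Terminal A x
  · exact Or.inr (Or.inl hT)
  by_cases hN : ∃ m ∈ A, m ≤ x ∧ IsP A (x - m)
  · exact Or.inr (Or.inr hN)
  left
  rw [isP_iff]
  obtain ⟨m0, hm0, hm0x⟩ : ∃ m ∈ A, m ≤ x := by
    by_contra h; push_neg at h; exact hT h
  refine ⟨⟨m0, hm0, hm0x⟩, fun m hm hmx => ?_⟩
  have hmne : m ≠ 0 := fun h => h0 (h ▸ hm)
  have hlt : x - m < x := sub_lt_self' hmx hmne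
  rcases ih _ hlt with hP | hN'
  · exact absurd ⟨m, hm, hmx, hP⟩ hN
  rcases hN' with ht | ⟨m', hm', hle', hP'⟩
  · exact Or.inl ht
  · exact Or.inr ⟨m', hm', hle', lt_of_le_of_lt tsub_le_self hlt, hP'⟩

end AuxLemmas

open Pointwise in
theorem reflexive_iff_sumset {d : ℕ} (A : Set (Fin d → ℕ)) :
    Pset A = A ↔ A + A = Aᶜ \ Tset A := by
  constructor
  · intro hPA
    have hmemP : ∀ y : Fin d → ℕ, y ∈ A ↔ IsP A y :=
      fun y => (Set.ext_iff.mp hPA y).symm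
    ext x
    constructor
    · rintro hx
      rw [Set.mem_add] at hx
      obtain ⟨a, ha, b, hb, hab⟩ := hx
      have hbP : IsP A b := (hmemP b).mp hb
      have halex : a ≤ x := hab ▸ le_self_add
      refine ⟨fun hxA => ?_, fun hT => hT a ha halex⟩
      have hxP : IsP A x := (hmemP x).mp hxA
      have hxb : x - a = b := by rw [← hab]; exact add_tsub_cancel_left a b
      rw [isP_iff] at hxP
      rcases hxP.2 a ha halex with ht | ⟨m', hm', hle', _, hP'⟩
      · rw [hxb] at ht
        rw [isP_iff] at hbP
        obtain ⟨m'', hm'', hle''⟩ := hbP.1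
        exact ht m'' hm'' hle''
      · rw [hxb] at hle' hP'
        exact no_P_option b hbP m' hm' hle' hP'
    · rintro ⟨hxA, hxT⟩
      have h0 : (0 : Fin d → ℕ) ∉ A := fun h0 =>
        not_isP_of_zero_mem h0 0 ((hmemP 0).mp h0)
      rcases isP_or_isN h0 x with hP | hN
      · exact absurd ((hmemP x).mpr hP) hxA
      rcases hN with ht | ⟨a, ha, hax, hP⟩
      · exact absurd ht hxT
      have hb : x - a ∈ A := (hmemP _).mpr hP
      rw [Set.mem_add]
      exact ⟨a, ha, x - a, hb, add_tsub_cancel_of_le hax⟩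
  · intro hS
    have h0 : (0 : Fin d → ℕ) ∉ A := by
      intro h0
      have : (0 : Fin d → ℕ) ∈ A + A := by
        rw [Set.mem_add]; exact ⟨0, h0, 0, h0, add_zero 0⟩
      rw [hS] at this
      exact this.1 h0
    have key : ∀ x : Fin d → ℕ, IsP A x ↔ x ∈ A := by
      refine fun x => wellFounded_lt.induction (C := fun x => IsP A x ↔ x ∈ A) x (fun x ih => ?_)
      constructor
      · intro hP
        by_contra hxA
        have hT : ¬ Terminal A x := by
          rw [isP_iff] at hP
          obtain ⟨m, hm, hmx⟩ := hP.1
          exact fun ht => ht m hm hmx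
        have hx : x ∈ A + A := by rw [hS]; exact ⟨hxA, hT⟩
        rw [Set.mem_add] at hx
        obtain ⟨a, ha, b, hb, hab⟩ := hx
        have halex : a ≤ x := hab ▸ le_self_add
        have hxb : x - a = b := by rw [← hab]; exact add_tsub_cancel_left a b
        rw [isP_iff] at hP
        rcases hP.2 a ha halex with ht | ⟨m', hm', hle', hlt, hP'⟩
        · rw [hxb] at ht
          exact ht b hb (le_refl b)
        · rw [hxb] at hle' hlt hP'
          have hsubA : b - m' ∈ A := (ih _ hlt).mp hP'
          have : b ∈ A + A := by
            rw [Set.mem_add]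
            exact ⟨m', hm', b - m', hsubA, add_tsub_cancel_of_le hle'⟩
          rw [hS] at this
          exact this.1 hb
      · intro hxA
        rw [isP_iff]
        refine ⟨⟨x, hxA, le_refl x⟩, fun m hm hmx => ?_⟩
        by_cases hT : Terminal A (x - m)
        · exact Or.inl hT
        have hy : x - m ∉ A := by
          intro hyA
          have : x ∈ A + A := by
            rw [Set.mem_add]
            exact ⟨m, hm, x - m, hyA, add_tsub_cancel_of_le hmx⟩
          rw [hS] at this
          exact this.1 hxA
        have hyAA : x - m ∈ A + A := by rw [hS]; exact ⟨hy, hT⟩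
        rw [Set.mem_add] at hyAA
        obtain ⟨a, ha, b, hb, hab⟩ := hyAA
        have hmne : m ≠ 0 := fun h => h0 (h ▸ hm)
        have hylt : x - m < x := sub_lt_self' hmx hmne
        have hblt : x - m - a < x := by
          rw [← hab, add_tsub_cancel_left]
          exact lt_of_le_of_lt (hab ▸ le_add_self) hylt
        refine Or.inr ⟨a, ha, hab ▸ le_self_add, hblt, ?_⟩
        rw [← hab, add_tsub_cancel_left] at hblt ⊢
        exact (ih _ hblt).mpr hb
    ext x
    exact key x
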